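/- Let n > 3 be prime. The number of elements β of F_{2^{6n}} of degree 6 over F_{2^n} satisfying β^{2^{2n}} = 1/β + 1 is 2^{2n} - 2^n - 2. -/

import Mathlib

local notation "K" => AlgebraicClosure (ZMod 2)

open Polynomial

private lemma htwo' : (2 : K) = 0 := by
  have := CharP.cast_eq_zero K 2; simpa using this

private lemma hfrob' (x y : K) (m : ℕ) : (x + y) ^ (2 ^ m) = x ^ (2 ^ m) + y ^ (2 ^ m) :=
  add_pow_char_pow x y 2 m

private lemma card_rootSet_poly (p : K[X]) (hsep : p.Separable) :
    (p.rootSet K).ncard = p.natDegree := by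
  rw [Set.ncard_eq_toFinset_card', Set.toFinset_card]
  exact Polynomial.card_rootSet_eq_natDegree hsep (IsAlgClosed.splits _)

/-- The main pointwise equivalence. -/
private lemma key (n : ℕ) (hn0 : 0 < n) (x : K) :
    ((x ^ (2 ^ (6 * n)) = x ∧ x ^ (2 ^ (2 * n)) ≠ x ∧ x ^ (2 ^ (3 * n)) ≠ x) ∧
        x ^ (2 ^ (2 * n)) = 1 / x + 1) ↔
      (x ^ (2 ^ (2 * n) + 1) + x + 1 = 0 ∧ ¬(x ^ 2 + x + 1 = 0) ∧
        ¬(x ^ (2 ^ n + 1) + x ^ (2 ^ n) + 1 = 0)) := by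
  have h2n : (2:ℕ) ^ (2 * n) ≠ 0 := by positivity
  have hnn : (2:ℕ) ^ n ≠ 0 := by positivity
  have pw23 : (x ^ (2 ^ (2*n))) ^ (2 ^ n) = x ^ (2 ^ (3*n)) := by
    rw [← pow_mul, ← pow_add]; congr 2; omega
  constructor
  · rintro ⟨⟨H1, H2, H3⟩, H4⟩
    have hx0 : x ≠ 0 := by
      intro h; rw [h, zero_pow h2n] at H4; simp at H4
    have E : x ^ (2 ^ (2*n)) * x = x + 1 := by
      field_simp at H4; linear_combination H4
    refine ⟨?_, ?_, ?_⟩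
    · rw [pow_succ]; linear_combination E + (x+1) * htwo'
    · intro hB
      apply H2
      have hcc : x ^ (2 ^ (2*n)) * x = x * x := by
        linear_combination E - hB + (x+1) * htwo'
      exact mul_right_cancel₀ hx0 hcc
    · intro hC
      apply H3
      have hC' : x ^ (2 ^ n) * x = x ^ (2 ^ n) + 1 := by
        rw [pow_succ] at hC; linear_combination hC - (x ^ (2^n) + 1) * htwo'
      have Eq : x ^ (2 ^ (3*n)) * x ^ (2 ^ n) = x ^ (2 ^ n) + 1 := by
        have h := congrArg (fun y : K => y ^ (2 ^ n)) E
        simp only [mul_pow] at h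
        rw [hfrob', pw23, one_pow] at h
        exact h
      have : x ^ (2 ^ (3*n)) * x ^ (2 ^ n) = x * x ^ (2 ^ n) := by
        rw [Eq, ← hC']; ring
      exact mul_right_cancel₀ (pow_ne_zero _ hx0) this
  · rintro ⟨G1, G2, G3⟩
    have hx0 : x ≠ 0 := by
      intro h; rw [h, zero_pow (by positivity)] at G1; simp at G1
    have E : x ^ (2 ^ (2*n)) * x = x + 1 := by
      rw [pow_succ] at G1; linear_combination G1 - (x+1) * htwo'
    have H2 : x ^ (2 ^ (2*n)) ≠ x := by
      intro h
      apply G2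
      rw [h] at E
      linear_combination E + (x+1) * htwo'
    have H3 : x ^ (2 ^ (3*n)) ≠ x := by
      intro h
      apply G3
      have Eq : x ^ (2 ^ (3*n)) * x ^ (2 ^ n) = x ^ (2 ^ n) + 1 := by
        have hh := congrArg (fun y : K => y ^ (2 ^ n)) E
        simp only [mul_pow] at hh
        rw [hfrob', pw23, one_pow] at hh
        exact hh
      rw [h] at Eq
      rw [pow_succ]
      linear_combination Eq + (x ^ (2^n) + 1) * htwo'
    have step1 : x * (x ^ (2 ^ (2*n)) + 1) = 1 := by
      linear_combination E + x * htwo'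
    have step2 : x ^ (2 ^ (2*n)) * ((x ^ (2 ^ (2*n))) ^ (2 ^ (2*n)) + 1) = 1 := by
      have h := congrArg (fun y : K => y ^ (2 ^ (2*n))) step1
      simp only [mul_pow, one_pow] at h
      rw [hfrob', one_pow] at h
      exact h
    have step3 : (x ^ (2 ^ (2*n))) ^ (2 ^ (2*n)) *
        (((x ^ (2 ^ (2*n))) ^ (2 ^ (2*n))) ^ (2 ^ (2*n)) + 1) = 1 := by
      have h := congrArg (fun y : K => y ^ (2 ^ (2*n))) step2
      simp only [mul_pow, one_pow] at h
      rw [hfrob', one_pow] at h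
      exact h
    set b := x ^ (2 ^ (2*n)) with hb
    set c := b ^ (2 ^ (2*n)) with hc
    set d := c ^ (2 ^ (2*n)) with hd
    have hca : c * (x + 1) = 1 := by
      linear_combination x * step2 - c * step1 - step1 + (x*c + x - 1) * htwo'
    have hc0 : c ≠ 0 := left_ne_zero_of_mul_eq_one hca
    have hdx : d = x := by
      have h : c * (d + 1) = c * (x + 1) := by rw [step3, hca]
      have := mul_left_cancel₀ hc0 h
      linear_combination this
    refine ⟨⟨?_, H2, H3⟩, ?_⟩
    · have hx6 : x ^ (2 ^ (6*n)) = d := by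
        rw [hd, hc, hb, ← pow_mul, ← pow_mul, ← pow_add, ← pow_add]
        congr 2
        omega
      rw [hx6, hdx]
    · rw [hb] at E ⊢
      field_simp
      linear_combination E

-- polynomial A
private lemma degA (m : ℕ) (hm : 0 < m) :
    ((X : K[X]) ^ (2 ^ m + 1) + X + 1).natDegree = 2 ^ m + 1 := by
  compute_degree!

private lemma neA (m : ℕ) (hm : 0 < m) : ((X : K[X]) ^ (2 ^ m + 1) + X + 1) ≠ 0 := by
  apply Polynomial.ne_zero_of_natDegree_gt (n := 0)
  rw [degA m hm]; positivity

private lemma memA (m : ℕ) (hm : 0 < m) (x : K) :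
    x ∈ ((X : K[X]) ^ (2 ^ m + 1) + X + 1).rootSet K ↔ x ^ (2 ^ m + 1) + x + 1 = 0 := by
  rw [Polynomial.mem_rootSet]
  simp [neA m hm]

private lemma sepA (m : ℕ) (hm : 0 < m) : ((X : K[X]) ^ (2 ^ m + 1) + X + 1).Separable := by
  have hd : derivative ((X : K[X]) ^ (2 ^ m + 1) + X + 1) = X ^ (2 ^ m) + 1 := by
    rw [derivative_add, derivative_add, derivative_X_pow, derivative_X, derivative_one]
    have h1 : (((2:ℕ) ^ m + 1 : ℕ) : K) = 1 := by
      push_cast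
      rw [htwo', zero_pow (by positivity), zero_add]
    norm_num [h1]
  rw [Polynomial.separable_def, hd,
    Polynomial.isCoprime_iff_aeval_ne_zero_of_isAlgClosed K K]
  intro a
  by_cases h : a ^ (2 ^ m) + 1 = 0
  · left
    have h2 : (a + 1) ^ (2 ^ m) = 0 := by rw [hfrob', one_pow]; exact h
    have h3 : a + 1 = 0 := by
      exact pow_eq_zero_iff (by positivity) |>.mp h2
    have ha : a = 1 := by linear_combination h3 - htwo'
    rw [ha]
    simp only [map_add, map_pow, map_one, aeval_X, one_pow]
    intro hcon
    have : (1 : K) = 0 := by linear_combination hcon - htwo'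
    exact one_ne_zero this
  · right
    simpa using h

-- polynomial B
private lemma neB : ((X : K[X]) ^ 2 + X + 1) ≠ 0 := by
  apply Polynomial.ne_zero_of_natDegree_gt (n := 0)
  have : ((X : K[X]) ^ 2 + X + 1).natDegree = 2 := by compute_degree!
  omega

private lemma memB (x : K) :
    x ∈ ((X : K[X]) ^ 2 + X + 1).rootSet K ↔ x ^ 2 + x + 1 = 0 := by
  rw [Polynomial.mem_rootSet]
  simp [neB]

private lemma sepB : ((X : K[X]) ^ 2 + X + 1).Separable := by
  have hd : derivative ((X : K[X]) ^ 2 + X + 1) = 1 := by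
    rw [derivative_add, derivative_add, derivative_X_pow, derivative_X, derivative_one]
    have h2 : ((2:ℕ) : K) = 0 := by exact_mod_cast htwo'
    norm_num [h2]
    exact htwo'
  rw [Polynomial.separable_def, hd]
  exact isCoprime_one_right

-- polynomial C
private lemma degC (m : ℕ) (hm : 0 < m) :
    ((X : K[X]) ^ (2 ^ m + 1) + X ^ (2 ^ m) + 1).natDegree = 2 ^ m + 1 := by
  compute_degree!
  all_goals omega

private lemma neC (m : ℕ) (hm : 0 < m) :
    ((X : K[X]) ^ (2 ^ m + 1) + X ^ (2 ^ m) + 1) ≠ 0 := by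
  apply Polynomial.ne_zero_of_natDegree_gt (n := 0)
  rw [degC m hm]; positivity

private lemma memC (m : ℕ) (hm : 0 < m) (x : K) :
    x ∈ ((X : K[X]) ^ (2 ^ m + 1) + X ^ (2 ^ m) + 1).rootSet K ↔
      x ^ (2 ^ m + 1) + x ^ (2 ^ m) + 1 = 0 := by
  rw [Polynomial.mem_rootSet]
  simp [neC m hm]

private lemma sepC (m : ℕ) (hm : 0 < m) :
    ((X : K[X]) ^ (2 ^ m + 1) + X ^ (2 ^ m) + 1).Separable := by
  have hd : derivative ((X : K[X]) ^ (2 ^ m + 1) + X ^ (2 ^ m) + 1) = X ^ (2 ^ m) := by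
    rw [derivative_add, derivative_add, derivative_X_pow, derivative_X_pow, derivative_one]
    have h1 : (((2:ℕ) ^ m + 1 : ℕ) : K) = 1 := by
      push_cast
      rw [htwo', zero_pow (by positivity), zero_add]
    have h2 : (((2:ℕ) ^ m : ℕ) : K) = 0 := by
      push_cast
      rw [htwo', zero_pow (by positivity)]
    norm_num [h1, h2]
  rw [Polynomial.separable_def, hd,
    Polynomial.isCoprime_iff_aeval_ne_zero_of_isAlgClosed K K]
  intro a
  by_cases h : a = 0
  · left
    rw [h]
    simp only [map_add, map_pow, map_one, aeval_X]
    rw [zero_pow (by positivity), zero_pow (by positivity)]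
    simp
  · right
    simp only [map_pow, aeval_X]
    exact pow_ne_zero _ h

private lemma degB : ((X : K[X]) ^ 2 + X + 1).natDegree = 2 := by compute_degree!

/-- The number of elements `β` of degree 6 over `F_{2^n}` satisfying
`β^{2^{2n}} = 1/β + 1` is `2^{2n} - 2^n - 2`. -/
theorem stmt_8 (n : ℕ) (hn : n.Prime) (hn3 : 3 < n) :
    Nat.card {β : K // (β ^ (2 ^ (6 * n)) = β ∧ β ^ (2 ^ (2 * n)) ≠ β ∧ β ^ (2 ^ (3 * n)) ≠ β) ∧
        β ^ (2 ^ (2 * n)) = 1 / β + 1}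
      = 2 ^ (2 * n) - 2 ^ n - 2 := by
  have hn0 : 0 < n := by omega
  have h2n0 : 0 < 2 * n := by omega
  -- number theory facts
  have h4n : (2:ℕ) ^ (2 * n) = 4 ^ n := by rw [pow_mul]; norm_num
  have hd1 : 3 ∣ 4 ^ n - 1 := by simpa using Nat.sub_dvd_pow_sub_pow 4 1 n
  have h1n : 1 ≤ (4:ℕ) ^ n := Nat.one_le_pow _ _ (by norm_num)
  obtain ⟨k, hk⟩ := hd1
  have hk1 : (2:ℕ) ^ (2 * n) = 3 * k + 1 := by omega
  obtain ⟨m, hm⟩ := hn.odd_of_ne_two (by omega)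
  have h1m : 1 ≤ (4:ℕ) ^ m := Nat.one_le_pow _ _ (by norm_num)
  have hd2 : 3 ∣ 4 ^ m - 1 := by simpa using Nat.sub_dvd_pow_sub_pow 4 1 m
  obtain ⟨t, ht⟩ := hd2
  have h2nm : (2:ℕ) ^ n = 4 ^ m * 2 := by rw [hm, pow_succ, pow_mul]; norm_num
  have hk2 : (2:ℕ) ^ n = 3 * (2 * t) + 2 := by omega
  -- the three root sets
  set A : Set K := (((X : K[X]) ^ (2 ^ (2 * n) + 1) + X + 1)).rootSet K with hA
  set B : Set K := (((X : K[X]) ^ 2 + X + 1)).rootSet K with hB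
  set C : Set K := (((X : K[X]) ^ (2 ^ n + 1) + X ^ (2 ^ n) + 1)).rootSet K with hC
  have finB : B.Finite := Polynomial.rootSet_finite _ K
  have finC : C.Finite := Polynomial.rootSet_finite _ K
  -- B ⊆ A
  have hBA : B ⊆ A := by
    intro x hx
    rw [hB, memB] at hx
    rw [hA, memA (2 * n) h2n0]
    have hx3 : x ^ 3 = 1 := by linear_combination (x + 1) * hx - (x ^ 2 + x + 1) * htwo'
    have hxp : x ^ (2 ^ (2 * n) + 1) = x ^ 2 := by
      rw [show 2 ^ (2 * n) + 1 = 3 * k + 2 by omega, pow_add, pow_mul, hx3, one_pow, one_mul]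
    rw [hxp]
    exact hx
  -- C ⊆ A
  have hCA : C ⊆ A := by
    intro x hx
    rw [hC, memC n hn0] at hx
    rw [hA, memA (2 * n) h2n0]
    have hx0 : x ≠ 0 := by
      intro h
      rw [h, zero_pow (by positivity : (2:ℕ) ^ n + 1 ≠ 0),
        zero_pow (by positivity : (2:ℕ) ^ n ≠ 0)] at hx
      simp at hx
    have hu : x ^ (2 ^ n) * (x + 1) = 1 := by
      rw [pow_succ] at hx
      linear_combination hx - htwo'
    have hA2 : x ^ (2 ^ (2 * n)) * (x ^ (2 ^ n) + 1) = 1 := by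
      have h := congrArg (fun y : K => y ^ (2 ^ n)) hu
      simp only [mul_pow, one_pow] at h
      rw [hfrob', one_pow] at h
      have hpw : (x ^ (2 ^ n)) ^ (2 ^ n) = x ^ (2 ^ (2 * n)) := by
        rw [← pow_mul]
        congr 1
        rw [← pow_add]
        congr 1
        omega
      rw [hpw] at h
      exact h
    rw [pow_succ]
    linear_combination (x + 1) * hA2 - x ^ (2 ^ (2 * n)) * hu +
      (x + 1 - x ^ (2 ^ (2 * n))) * htwo'
  -- disjointness
  have hdisj : Disjoint B C := by
    rw [Set.disjoint_left]
    intro x hxB hxC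
    rw [hB, memB] at hxB
    rw [hC, memC n hn0] at hxC
    have hx3 : x ^ 3 = 1 := by linear_combination (x + 1) * hxB - (x ^ 2 + x + 1) * htwo'
    have e1 : x ^ (2 ^ n + 1) = 1 := by
      rw [show 2 ^ n + 1 = 3 * (2 * t + 1) by omega, pow_mul, hx3, one_pow]
    have e2 : x ^ (2 ^ n) = x ^ 2 := by
      rw [show 2 ^ n = 3 * (2 * t) + 2 by omega, pow_add, pow_mul, hx3, one_pow, one_mul]
    rw [e1, e2] at hxC
    have hx2 : x ^ 2 = 0 := by linear_combination hxC - htwo'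
    have hx : x = 0 := by
      exact (pow_eq_zero_iff (two_ne_zero)).mp hx2
    rw [hx] at hxB
    simp at hxB
  -- set equality
  have hsetEq : {β : K | (β ^ (2 ^ (6 * n)) = β ∧ β ^ (2 ^ (2 * n)) ≠ β ∧
        β ^ (2 ^ (3 * n)) ≠ β) ∧ β ^ (2 ^ (2 * n)) = 1 / β + 1} = A \ (B ∪ C) := by
    ext x
    simp only [Set.mem_setOf_eq, Set.mem_diff, Set.mem_union, hA, hB, hC,
      memA (2 * n) h2n0, memB, memC n hn0, key n hn0 x]
    tauto
  -- counting
  have hcard : Nat.card {β : K // (β ^ (2 ^ (6 * n)) = β ∧ β ^ (2 ^ (2 * n)) ≠ β ∧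
        β ^ (2 ^ (3 * n)) ≠ β) ∧ β ^ (2 ^ (2 * n)) = 1 / β + 1}
      = (A \ (B ∪ C)).ncard := by
    rw [← hsetEq]
    exact Nat.card_coe_set_eq _
  rw [hcard]
  have hAcard : A.ncard = 2 ^ (2 * n) + 1 := by
    rw [hA, card_rootSet_poly _ (sepA (2 * n) h2n0), degA (2 * n) h2n0]
  have hBcard : B.ncard = 2 := by
    rw [hB, card_rootSet_poly _ sepB, degB]
  have hCcard : C.ncard = 2 ^ n + 1 := by
    rw [hC, card_rootSet_poly _ (sepC n hn0), degC n hn0]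
  rw [Set.ncard_diff (Set.union_subset hBA hCA) (finB.union finC),
    Set.ncard_union_eq hdisj finB finC, hAcard, hBcard, hCcard]
  have hq2 : (2:ℕ) ^ (2 * n) = 2 ^ n * 2 ^ n := by rw [two_mul, pow_add]
  have hq4 : 4 ≤ (2:ℕ) ^ n := by
    calc (4:ℕ) = 2 ^ 2 := by norm_num
    _ ≤ 2 ^ n := Nat.pow_le_pow_right (by norm_num) (by omega)
  omega
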